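/- Let λ₁, λ₂ be probability measures on X with ‖λ₁ − λ₂‖_TV ≤ δ, and let g: X → [0, ∞) be measurable with 0 < ∫ g dμ < ∞. Define Iⱼ := ∫_X ∫_X g(x′) q(x, x′) μ(dx′) λⱼ(dx) for j = 1, 2. Then σ₋ ∫g dμ ≤ Iⱼ ≤ σ₊ ∫g dμ for j = 1, 2, and |log I₁ − log I₂| ≤ δ σ₊/σ₋ = δ/(1 − ρ), where ρ = 1 − σ₋/σ₊. (This is the key step in the proofs of Lemmas 2, 3 and 11: a total-variation perturbation of the filtering distribution perturbs the one-step predictive log-density by at most δ/(1 − ρ).) -/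

import Mathlib

open MeasureTheory

/-- Total variation distance between two measures:
`‖μ − ν‖_TV = sup_{A measurable} |μ(A) − ν(A)|`. -/
noncomputable def tvDist {X : Type*} [MeasurableSpace X] (μ ν : Measure X) : ℝ :=
  ⨆ A : {A : Set X // MeasurableSet A}, |(μ A.1).toReal - (ν A.1).toReal|

section Aux

variable {X : Type*} [MeasurableSpace X]

lemma tvDist_bddAbove (lam₁ lam₂ : Measure X) [IsProbabilityMeasure lam₁]
    [IsProbabilityMeasure lam₂] :
    BddAbove (Set.range fun A : {A : Set X // MeasurableSet A} =>
      |(lam₁ A.1).toReal - (lam₂ A.1).toReal|) := by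
  refine ⟨1, ?_⟩
  rintro y ⟨⟨A, hA⟩, rfl⟩
  have h1 : (lam₁ A).toReal ≤ 1 := by
    simpa using ENNReal.toReal_mono (by simp) (prob_le_one (μ := lam₁) (s := A))
  have h2 : (lam₂ A).toReal ≤ 1 := by
    simpa using ENNReal.toReal_mono (by simp) (prob_le_one (μ := lam₂) (s := A))
  have h1' : (0:ℝ) ≤ (lam₁ A).toReal := ENNReal.toReal_nonneg
  have h2' : (0:ℝ) ≤ (lam₂ A).toReal := ENNReal.toReal_nonneg
  rw [abs_le]; constructor <;> linarith

lemma abs_sub_le_tvDist (lam₁ lam₂ : Measure X) [IsProbabilityMeasure lam₁]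
    [IsProbabilityMeasure lam₂] {A : Set X} (hA : MeasurableSet A) :
    |(lam₁ A).toReal - (lam₂ A).toReal| ≤ tvDist lam₁ lam₂ :=
  le_ciSup (tvDist_bddAbove lam₁ lam₂) ⟨A, hA⟩

lemma tvDist_nonneg (lam₁ lam₂ : Measure X) [IsProbabilityMeasure lam₁]
    [IsProbabilityMeasure lam₂] : 0 ≤ tvDist lam₁ lam₂ := by
  have := abs_sub_le_tvDist lam₁ lam₂ (A := ∅) MeasurableSet.empty
  simpa using this.trans' (abs_nonneg _)

lemma tvDist_comm (lam₁ lam₂ : Measure X) : tvDist lam₁ lam₂ = tvDist lam₂ lam₁ := by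
  unfold tvDist
  congr 1; funext A; rw [abs_sub_comm]

lemma integrable_of_bounds {F : X → ℝ} {a b : ℝ} (ν : Measure X) [IsFiniteMeasure ν]
    (hF : Measurable F) (hFa : ∀ x, a ≤ F x) (hFb : ∀ x, F x ≤ b) :
    Integrable F ν := by
  refine (integrable_const (max |a| |b|)).mono' hF.aestronglyMeasurable ?_
  filter_upwards with x
  rw [Real.norm_eq_abs, abs_le]
  constructor
  · have := hFa x
    have : -|a| ≤ a := neg_abs_le a
    exact le_trans (neg_le_neg (le_max_left |a| |b|)) (by linarith [hFa x, neg_abs_le a])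
  · exact le_trans (hFb x) (le_trans (le_abs_self b) (le_max_right _ _))

/-- Key perturbation bound: if `a ≤ F ≤ b` then
`∫ F dλ₁ − ∫ F dλ₂ ≤ (b − a) · tvDist λ₁ λ₂`. -/
lemma integral_sub_le_tvDist {F : X → ℝ} {a b : ℝ}
    (lam₁ lam₂ : Measure X) [IsProbabilityMeasure lam₁] [IsProbabilityMeasure lam₂]
    (hF : Measurable F) (hab : a ≤ b) (hFa : ∀ x, a ≤ F x) (hFb : ∀ x, F x ≤ b) :
    ∫ x, F x ∂lam₁ - ∫ x, F x ∂lam₂ ≤ (b - a) * tvDist lam₁ lam₂ := by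
  obtain ⟨S, hS, h1, h2⟩ := hahn_decomposition (μ := lam₁) (ν := lam₂)
  have hle₁ : lam₂.restrict S ≤ lam₁.restrict S := by
    refine Measure.le_iff.2 fun t ht => ?_
    rw [Measure.restrict_apply ht, Measure.restrict_apply ht]
    exact h1 _ (ht.inter hS) Set.inter_subset_right
  have hle₂ : lam₁.restrict Sᶜ ≤ lam₂.restrict Sᶜ := by
    refine Measure.le_iff.2 fun t ht => ?_
    rw [Measure.restrict_apply ht, Measure.restrict_apply ht]
    exact h2 _ (ht.inter hS.compl) Set.inter_subset_right
  set ν₁ : Measure X := lam₁.restrict S - lam₂.restrict S with hν₁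
  set ν₂ : Measure X := lam₂.restrict Sᶜ - lam₁.restrict Sᶜ with hν₂
  have hadd₁ : ν₁ + lam₂.restrict S = lam₁.restrict S :=
    Measure.sub_add_cancel_of_le hle₁
  have hadd₂ : ν₂ + lam₁.restrict Sᶜ = lam₂.restrict Sᶜ :=
    Measure.sub_add_cancel_of_le hle₂
  have hfin₁ : IsFiniteMeasure ν₁ := by
    constructor
    have : ν₁ Set.univ ≤ lam₁.restrict S Set.univ := MeasureTheory.Measure.sub_le Set.univ
    exact lt_of_le_of_lt this (measure_lt_top _ _)
  have hfin₂ : IsFiniteMeasure ν₂ := by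
    constructor
    have : ν₂ Set.univ ≤ lam₂.restrict Sᶜ Set.univ := MeasureTheory.Measure.sub_le Set.univ
    exact lt_of_le_of_lt this (measure_lt_top _ _)
  -- integral splits
  have hi : ∀ (ν : Measure X) [IsFiniteMeasure ν], Integrable F ν := fun ν _ =>
    integrable_of_bounds ν hF hFa hFb
  have split₁ : ∫ x, F x ∂lam₁ = (∫ x, F x ∂ν₁ + ∫ x in S, F x ∂lam₂) + ∫ x in Sᶜ, F x ∂lam₁ := by
    rw [← integral_add_compl hS (hi lam₁)]
    congr 1
    rw [← hadd₁, integral_add_measure (hi ν₁) (hi _)]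
  have split₂ : ∫ x, F x ∂lam₂ = ∫ x in S, F x ∂lam₂ + (∫ x, F x ∂ν₂ + ∫ x in Sᶜ, F x ∂lam₁) := by
    rw [← integral_add_compl hS (hi lam₂)]
    congr 1
    rw [← hadd₂, integral_add_measure (hi ν₂) (hi _)]
  set d : ℝ := (lam₁ S).toReal - (lam₂ S).toReal with hd
  have hν₁univ : (ν₁ Set.univ).toReal = d := by
    rw [hν₁, Measure.sub_apply MeasurableSet.univ hle₁, Measure.restrict_apply_univ,
      Measure.restrict_apply_univ, ENNReal.toReal_sub_of_le (h1 S hS le_rfl) (measure_ne_top _ _)]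
  have hcompl : ∀ (lam : Measure X) [IsProbabilityMeasure lam],
      (lam Sᶜ).toReal = 1 - (lam S).toReal := by
    intro lam _
    rw [prob_compl_eq_one_sub hS, ENNReal.toReal_sub_of_le prob_le_one (by simp)]
    simp
  have hν₂univ : (ν₂ Set.univ).toReal = d := by
    rw [hν₂, Measure.sub_apply MeasurableSet.univ hle₂, Measure.restrict_apply_univ,
      Measure.restrict_apply_univ, ENNReal.toReal_sub_of_le (h2 Sᶜ hS.compl le_rfl)
      (measure_ne_top _ _), hcompl lam₁, hcompl lam₂]
    ring
  have hd0 : 0 ≤ d := by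
    rw [← hν₁univ]; exact ENNReal.toReal_nonneg
  have hdtv : d ≤ tvDist lam₁ lam₂ :=
    le_trans (le_abs_self d) (abs_sub_le_tvDist lam₁ lam₂ hS)
  have hub : ∫ x, F x ∂ν₁ ≤ b * d := by
    have : ∫ x, F x ∂ν₁ ≤ ∫ _x, b ∂ν₁ :=
      integral_mono (hi ν₁) (integrable_const b) hFb
    rwa [integral_const, smul_eq_mul, measureReal_def, hν₁univ, mul_comm] at this
  have hlb : a * d ≤ ∫ x, F x ∂ν₂ := by
    have : ∫ _x, a ∂ν₂ ≤ ∫ x, F x ∂ν₂ :=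
      integral_mono (integrable_const a) (hi ν₂) hFa
    rwa [integral_const, smul_eq_mul, measureReal_def, hν₂univ, mul_comm] at this
  have key : ∫ x, F x ∂lam₁ - ∫ x, F x ∂lam₂ = ∫ x, F x ∂ν₁ - ∫ x, F x ∂ν₂ := by
    rw [split₁, split₂]; ring
  rw [key]
  have : ∫ x, F x ∂ν₁ - ∫ x, F x ∂ν₂ ≤ (b - a) * d := by nlinarith
  exact this.trans (by nlinarith [tvDist_nonneg lam₁ lam₂])

lemma abs_integral_sub_le_tvDist {F : X → ℝ} {a b : ℝ}
    (lam₁ lam₂ : Measure X) [IsProbabilityMeasure lam₁] [IsProbabilityMeasure lam₂]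
    (hF : Measurable F) (hab : a ≤ b) (hFa : ∀ x, a ≤ F x) (hFb : ∀ x, F x ≤ b) :
    |∫ x, F x ∂lam₁ - ∫ x, F x ∂lam₂| ≤ (b - a) * tvDist lam₁ lam₂ := by
  rw [abs_sub_le_iff]
  refine ⟨integral_sub_le_tvDist lam₁ lam₂ hF hab hFa hFb, ?_⟩
  rw [tvDist_comm]
  exact integral_sub_le_tvDist lam₂ lam₁ hF hab hFa hFb

lemma abs_log_sub_log_le {a b c e : ℝ} (hc : 0 < c) (hca : c ≤ a) (hcb : c ≤ b)
    (he : |a - b| ≤ e) : |Real.log a - Real.log b| ≤ e / c := by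
  wlog h : b ≤ a generalizing a b
  · exact abs_sub_comm (Real.log a) (Real.log b) ▸
      this hcb hca (abs_sub_comm a b ▸ he) (le_of_not_ge h)
  have hb : 0 < b := lt_of_lt_of_le hc hcb
  have ha : 0 < a := lt_of_lt_of_le hb h
  rw [abs_of_nonneg (sub_nonneg.2 (Real.log_le_log hb h))]
  rw [abs_of_nonneg (sub_nonneg.2 h)] at he
  have hlog : Real.log a - Real.log b ≤ a / b - 1 := by
    rw [← Real.log_div ha.ne' hb.ne']
    exact Real.log_le_sub_one_of_pos (div_pos ha hb)
  have : a / b - 1 = (a - b) / b := by field_simp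
  rw [this] at hlog
  refine hlog.trans ?_
  exact div_le_div₀ (by linarith [abs_nonneg (a-b)]) he hc hcb

end Aux

/-- key step of Lemmas 2, 3 and 11. If `‖λ₁ − λ₂‖_TV ≤ δ` and
`Iⱼ := ∫∫ g(x′) q(x, x′) μ(dx′) λⱼ(dx)`, then
`σ₋ ∫g dμ ≤ Iⱼ ≤ σ₊ ∫g dμ` and `|log I₁ − log I₂| ≤ δ σ₊/σ₋ = δ/(1 − ρ)` with
`ρ = 1 − σ₋/σ₊`. -/
theorem predictive_log_density_perturbation
    {X : Type*} [MeasurableSpace X] (μ : Measure X) [IsProbabilityMeasure μ]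
    (σm σp : ℝ) (hσm : 0 < σm) (hσ : σm ≤ σp)
    (q : X → X → ℝ) (hq : Measurable (Function.uncurry q))
    (hql : ∀ x x', σm ≤ q x x') (hqu : ∀ x x', q x x' ≤ σp)
    (lam₁ lam₂ : Measure X) [IsProbabilityMeasure lam₁] [IsProbabilityMeasure lam₂]
    (δ : ℝ) (hTV : tvDist lam₁ lam₂ ≤ δ)
    (g : X → ℝ) (hgm : Measurable g) (hg0 : ∀ x, 0 ≤ g x)
    (hgi : Integrable g μ) (hgpos : 0 < ∫ x, g x ∂μ) :
    (σm * ∫ x, g x ∂μ ≤ ∫ x, (∫ x', g x' * q x x' ∂μ) ∂lam₁ ∧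
        ∫ x, (∫ x', g x' * q x x' ∂μ) ∂lam₁ ≤ σp * ∫ x, g x ∂μ) ∧
    (σm * ∫ x, g x ∂μ ≤ ∫ x, (∫ x', g x' * q x x' ∂μ) ∂lam₂ ∧
        ∫ x, (∫ x', g x' * q x x' ∂μ) ∂lam₂ ≤ σp * ∫ x, g x ∂μ) ∧
    |Real.log (∫ x, (∫ x', g x' * q x x' ∂μ) ∂lam₁) -
        Real.log (∫ x, (∫ x', g x' * q x x' ∂μ) ∂lam₂)| ≤ δ * σp / σm ∧
    δ * σp / σm = δ / (1 - (1 - σm / σp)) := by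
  set G : ℝ := ∫ x, g x ∂μ with hG
  set F : X → ℝ := fun x => ∫ x', g x' * q x x' ∂μ with hF
  -- measurability of F
  have hFmeas : Measurable F := by
    have h1 : Measurable fun p : X × X => g p.2 * q p.1 p.2 :=
      (hgm.comp measurable_snd).mul hq
    exact h1.stronglyMeasurable.integral_prod_right'.measurable
  -- integrability of the inner integrand
  have hinner : ∀ x, Integrable (fun x' => g x' * q x x') μ := by
    intro x
    refine (hgi.const_mul σp).mono' ?_ ?_
    · exact ((hgm.mul (hq.comp (measurable_prodMk_left))).aestronglyMeasurable)
    · filter_upwards with x'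
      rw [Real.norm_eq_abs, abs_of_nonneg (mul_nonneg (hg0 x') (le_trans hσm.le (hql x x')))]
      calc g x' * q x x' ≤ g x' * σp := mul_le_mul_of_nonneg_left (hqu x x') (hg0 x')
        _ = σp * g x' := mul_comm _ _
  -- pointwise bounds on F
  have hFa : ∀ x, σm * G ≤ F x := by
    intro x
    have : ∫ x', σm * g x' ∂μ ≤ ∫ x', g x' * q x x' ∂μ := by
      refine integral_mono (hgi.const_mul σm) (hinner x) fun x' => ?_
      rw [mul_comm]
      exact mul_le_mul_of_nonneg_left (hql x x') (hg0 x')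
    simpa [integral_const_mul] using this
  have hFb : ∀ x, F x ≤ σp * G := by
    intro x
    have : ∫ x', g x' * q x x' ∂μ ≤ ∫ x', σp * g x' ∂μ := by
      refine integral_mono (hinner x) (hgi.const_mul σp) fun x' => ?_
      rw [mul_comm σp]
      exact mul_le_mul_of_nonneg_left (hqu x x') (hg0 x')
    simpa [integral_const_mul] using this
  have hab : σm * G ≤ σp * G := mul_le_mul_of_nonneg_right hσ hgpos.le
  have hbounds : ∀ (lam : Measure X) [IsProbabilityMeasure lam],
      σm * G ≤ ∫ x, F x ∂lam ∧ ∫ x, F x ∂lam ≤ σp * G := by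
    intro lam _
    constructor
    · have : ∫ _x, σm * G ∂lam ≤ ∫ x, F x ∂lam :=
        integral_mono (integrable_const _) (integrable_of_bounds lam hFmeas hFa hFb) hFa
      simpa using this
    · have : ∫ x, F x ∂lam ≤ ∫ _x, σp * G ∂lam :=
        integral_mono (integrable_of_bounds lam hFmeas hFa hFb) (integrable_const _) hFb
      simpa using this
  have hδ0 : 0 ≤ δ := le_trans (tvDist_nonneg lam₁ lam₂) hTV
  refine ⟨hbounds lam₁, hbounds lam₂, ?_, ?_⟩
  · have habs : |∫ x, F x ∂lam₁ - ∫ x, F x ∂lam₂| ≤ (σp * G - σm * G) * δ := by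
      refine le_trans (abs_integral_sub_le_tvDist lam₁ lam₂ hFmeas hab hFa hFb) ?_
      exact mul_le_mul_of_nonneg_left hTV (by linarith)
    have hc : 0 < σm * G := mul_pos hσm hgpos
    have hlog := abs_log_sub_log_le hc (hbounds lam₁).1 (hbounds lam₂).1 habs
    refine hlog.trans ?_
    rw [div_le_iff₀ hc]
    have : δ * σp / σm * (σm * G) = δ * σp * G := by field_simp
    rw [this]
    nlinarith
  · have h1 : 1 - (1 - σm / σp) = σm / σp := by ring
    rw [h1, div_div_eq_mul_div]
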